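/- arXiv:2011.10262 — 2 statements merged into one kernel-verified Lean document; each statement's English description precedes it below -/
import Mathlib

section
/- Let {X_n} be a sequence of random variables stochastically dominated by a random variable X with E|X|^p < ∞ for some 0 < p < 2, and let φ: ℝ → ℝ satisfy |φ(x)| ≤ |x| for all x. Then for every r > p, ∑_{n=1}^∞ ∑_{k=1}^n (k^{r/p} (Log n)^r) / (n^{r/p+1} (Log k)^{r²/(r-p)}) · P(|φ(X_k)| > k^{1/p} / (Log k)^{r/(r-p)}) < ∞. -/
open MeasureTheory Filter
noncomputable def Log (x : ℝ) : ℝ := Real.log (max x (Real.exp 1))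

lemma one_le_Log (x : ℝ) : 1 ≤ Log x := by
  have h := Real.log_le_log (Real.exp_pos 1) (le_max_right x (Real.exp 1))
  simpa [Log, Real.log_exp] using h

lemma Log_pos (x : ℝ) : 0 < Log x := lt_of_lt_of_le one_pos (one_le_Log x)

lemma Log_mono {x y : ℝ} (h : x ≤ y) : Log x ≤ Log y :=
  Real.log_le_log (lt_of_lt_of_le (Real.exp_pos 1) (le_max_right x _))
    (max_le_max h le_rfl)

lemma log_le_Log {x : ℝ} (h : 0 < x) : Real.log x ≤ Log x :=
  Real.log_le_log h (le_max_left _ _)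

-- log z ≤ z^δ / δ for z > 0, δ > 0
lemma log_le_rpow_div {z δ : ℝ} (hz : 0 < z) (hδ : 0 < δ) :
    Real.log z ≤ z ^ δ / δ := by
  have h1 : Real.log (z ^ δ) ≤ z ^ δ - 1 := Real.log_le_sub_one_of_pos (Real.rpow_pos_of_pos hz δ)
  rw [Real.log_rpow hz] at h1
  rw [le_div_iff₀ hδ]
  nlinarith [Real.rpow_pos_of_pos hz δ]

lemma one_add_log_le {z δ : ℝ} (hz : 1 ≤ z) (hδ : 0 < δ) :
    1 + Real.log z ≤ (1 + 1/δ) * z ^ δ := by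
  have h1 := log_le_rpow_div (lt_of_lt_of_le one_pos hz) hδ
  have h2 : (1:ℝ) ≤ z ^ δ := Real.one_le_rpow hz hδ.le
  have : z ^ δ / δ = (1/δ) * z ^ δ := by ring
  nlinarith

lemma Log_le_rpow {x δ : ℝ} (hx : 1 ≤ x) (hδ : 0 < δ) :
    Log x ≤ (1 + 1/δ) * x ^ δ := by
  have h2 : (1:ℝ) ≤ x ^ δ := Real.one_le_rpow hx hδ.le
  have h3 : Log x ≤ 1 + Real.log x := by
    unfold Log
    rcases max_cases x (Real.exp 1) with ⟨h, _⟩ | ⟨h, _⟩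
    · rw [h]; nlinarith [Real.log_nonneg hx]
    · rw [h, Real.log_exp]; nlinarith [Real.log_nonneg hx]
  calc Log x ≤ 1 + Real.log x := h3
    _ ≤ (1 + 1/δ) * x ^ δ := one_add_log_le hx hδ

lemma Log_ratio {x y : ℝ} (hx : 1 ≤ x) (hxy : x ≤ y) :
    Log y ≤ Log x * (1 + Real.log (y/x)) := by
  have hx0 : 0 < x := lt_of_lt_of_le one_pos hx
  have hy0 : 0 < y := lt_of_lt_of_le hx0 hxy
  have hz : (1:ℝ) ≤ y / x := (one_le_div hx0).mpr hxy
  have hlz : 0 ≤ Real.log (y/x) := Real.log_nonneg hz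
  have h1 : 1 ≤ Log x := one_le_Log x
  rcases le_or_gt y (Real.exp 1) with h | h
  · have : Log y = 1 := by
      unfold Log; rw [max_eq_right h, Real.log_exp]
    rw [this]; nlinarith
  · have : Log y = Real.log y := by
      unfold Log; rw [max_eq_left h.le]
    rw [this]
    have hsplit : Real.log y = Real.log x + Real.log (y/x) := by
      rw [Real.log_div hy0.ne' hx0.ne']; ring
    rw [hsplit]
    have := log_le_Log hx0
    nlinarith

lemma tele {τ : ℝ} (hτ : 0 < τ) {n : ℕ} (hn : 1 ≤ n) :
    (n:ℝ) ^ (-(1+τ)) ≤ (2 ^ (τ+1) / τ) * ((n:ℝ) ^ (-τ) - ((n:ℝ)+1) ^ (-τ)) := by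
  have ha : (1:ℝ) ≤ (n:ℝ) := by exact_mod_cast hn
  set a : ℝ := (n:ℝ) with hadef
  have ha0 : 0 < a := lt_of_lt_of_le one_pos ha
  have hb0 : (0:ℝ) < 1 + 1/a := by positivity
  have key : (a+1) ^ (-τ) = a ^ (-τ) * (1+1/a) ^ (-τ) := by
    rw [← Real.mul_rpow ha0.le hb0.le]
    congr 1
    field_simp
  have hlog : 1/(a+1) ≤ Real.log (1+1/a) := by
    have h2 := Real.log_le_sub_one_of_pos (show (0:ℝ) < (1+1/a)⁻¹ by positivity)
    rw [Real.log_inv] at h2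
    have h3 : (1:ℝ) - (1+1/a)⁻¹ = 1/(a+1) := by
      rw [eq_div_iff (by positivity)]
      field_simp
      ring
    linarith
  have hw1 : 1 + τ * Real.log (1+1/a) ≤ (1+1/a) ^ τ := by
    rw [Real.rpow_def_of_pos hb0]
    have := Real.add_one_le_exp (Real.log (1+1/a) * τ)
    linarith
  have hwle : (1+1/a) ^ τ ≤ 2 ^ τ := by
    apply Real.rpow_le_rpow hb0.le _ hτ.le
    have : 1/a ≤ 1 := by rw [div_le_one ha0]; exact ha
    linarith
  set w : ℝ := (1+1/a) ^ τ with hwdef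
  have hw0 : 0 < w := Real.rpow_pos_of_pos hb0 τ
  have hw : 1 + τ/(2*a) ≤ w := by
    have h4 : τ/(2*a) ≤ τ * (1/(a+1)) := by
      rw [div_le_iff₀ (by positivity)]
      rw [mul_comm τ (1/(a+1))]
      rw [mul_assoc]
      rw [div_mul_eq_mul_div, le_div_iff₀ (by positivity)]
      nlinarith
    have h5 : τ * (1/(a+1)) ≤ τ * Real.log (1+1/a) :=
      mul_le_mul_of_nonneg_left hlog hτ.le
    linarith
  have hinv : (1+1/a) ^ (-τ) = w⁻¹ := by
    rw [Real.rpow_neg hb0.le]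
  rw [key, hinv]
  have hsplit : a ^ (-(1+τ)) = a ^ (-τ) * a⁻¹ := by
    rw [← Real.rpow_neg_one a, ← Real.rpow_add ha0]
    ring_nf
  rw [hsplit]
  have hat : (0:ℝ) < a ^ (-τ) := Real.rpow_pos_of_pos ha0 _
  have h2t : (0:ℝ) < 2 ^ τ := Real.rpow_pos_of_pos two_pos _
  have h2t1 : (2:ℝ) ^ (τ+1) = 2 ^ τ * 2 := by
    rw [Real.rpow_add two_pos, Real.rpow_one]
  have hd : (τ/(2*a))/2^τ ≤ 1 - w⁻¹ := by
    have h7 : 1 - w⁻¹ = (w-1)/w := by field_simp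
    rw [h7, div_le_div_iff₀ h2t hw0]
    nlinarith [mul_le_mul_of_nonneg_left hwle (show (0:ℝ) ≤ τ/(2*a) by positivity),
      mul_le_mul_of_nonneg_right (show τ/(2*a) ≤ w - 1 by linarith) h2t.le]
  have heq : (2^(τ+1)/τ) * ((τ/(2*a))/2^τ) = a⁻¹ := by
    rw [h2t1]; field_simp
  calc a ^ (-τ) * a⁻¹ = a ^ (-τ) * ((2^(τ+1)/τ) * ((τ/(2*a))/2^τ)) := by rw [heq]
    _ ≤ a ^ (-τ) * ((2^(τ+1)/τ) * (1 - w⁻¹)) := by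
        apply mul_le_mul_of_nonneg_left _ hat.le
        apply mul_le_mul_of_nonneg_left hd
        positivity
    _ = 2 ^ (τ+1) / τ * (a ^ (-τ) - a ^ (-τ) * w⁻¹) := by ring

lemma sum_Ico_tele (g : ℕ → ℝ) (k : ℕ) : ∀ N, k ≤ N →
    ∑ i ∈ Finset.Ico k N, (g i - g (i+1)) = g k - g N := by
  intro N
  induction N with
  | zero => intro h; simp [Nat.le_zero.mp h]
  | succ M ih =>
    intro h
    rcases Nat.lt_or_ge k (M+1) with h1 | h1
    · have hkM : k ≤ M := Nat.lt_succ_iff.mp h1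
      rw [Finset.sum_Ico_succ_top hkM, ih hkM]
      ring
    · have : k = M + 1 := le_antisymm h h1
      simp [this]

lemma tail_sum {τ : ℝ} (hτ : 0 < τ) {k : ℕ} (hk : 1 ≤ k) (N : ℕ) :
    ∑ n ∈ Finset.Ico k N, (n:ℝ)^(-(1+τ)) ≤ (2^(τ+1)/τ) * (k:ℝ)^(-τ) := by
  have hc : (0:ℝ) ≤ 2^(τ+1)/τ := by positivity
  rcases Nat.lt_or_ge N k with h | h
  · rw [Finset.Ico_eq_empty (by omega)]
    simp
    positivity
  · calc ∑ n ∈ Finset.Ico k N, (n:ℝ)^(-(1+τ))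
        ≤ ∑ n ∈ Finset.Ico k N, (2^(τ+1)/τ) * ((n:ℝ)^(-τ) - ((n:ℝ)+1)^(-τ)) := by
          apply Finset.sum_le_sum
          intro i hi
          rw [Finset.mem_Ico] at hi
          exact tele hτ (le_trans hk hi.1)
      _ = (2^(τ+1)/τ) * ∑ n ∈ Finset.Ico k N, ((n:ℝ)^(-τ) - (((n+1:ℕ)):ℝ)^(-τ)) := by
          rw [Finset.mul_sum]
          congr 1
          ext n
          push_cast
          ring
      _ = (2^(τ+1)/τ) * ((k:ℝ)^(-τ) - (N:ℝ)^(-τ)) := by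
          rw [sum_Ico_tele (fun n => (n:ℝ)^(-τ)) k N h]
      _ ≤ (2^(τ+1)/τ) * (k:ℝ)^(-τ) := by
          apply mul_le_mul_of_nonneg_left _ hc
          have : (0:ℝ) ≤ (N:ℝ)^(-τ) := Real.rpow_nonneg (Nat.cast_nonneg N) _
          linarith

lemma Log_mul_le {u v : ℝ} (hu : 0 < u) (hv : 0 < v) : Log (u*v) ≤ Log u + Log v := by
  have h1 := one_le_Log u
  have h2 := one_le_Log v
  unfold Log
  rcases max_cases (u*v) (Real.exp 1) with ⟨h, _⟩ | ⟨h, _⟩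
  · rw [h, Real.log_mul hu.ne' hv.ne']
    exact add_le_add (log_le_Log hu) (log_le_Log hv)
  · rw [h, Real.log_exp]; unfold Log at h1 h2; linarith

lemma Log_rpow_le {x pp : ℝ} (hx : 0 < x) (hpp : 0 < pp) : Log (x ^ pp) ≤ (pp+1) * Log x := by
  have h1 := one_le_Log x
  rcases le_or_gt (x ^ pp) (Real.exp 1) with h | h
  · have h2 : Log (x^pp) = 1 := by unfold Log; rw [max_eq_right h, Real.log_exp]
    rw [h2]; nlinarith
  · have hL : Log (x^pp) = pp * Real.log x := by
      unfold Log; rw [max_eq_left h.le, Real.log_rpow hx]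
    have hlogpos : 0 < Real.log x := by
      have h3 : 1 ≤ Real.log (x^pp) := by
        rw [← Real.log_exp 1]
        exact Real.log_le_log (Real.exp_pos 1) h.le
      rw [Real.log_rpow hx] at h3; nlinarith
    rw [hL]
    have h4 := log_le_Log hx
    nlinarith

-- tail sum with Log weight
lemma Stail {p r : ℝ} (hp : 0 < p) (hpr : p < r) {k : ℕ} (hk : 1 ≤ k) (N : ℕ) :
    ∑ n ∈ Finset.Ico k N, Log n ^ r / (n:ℝ) ^ (r/p+1)
      ≤ ((1+2*p) ^ r * (2 ^ (r/(2*p)+1) / (r/(2*p)))) * Log k ^ r * (k:ℝ) ^ (-(r/p)) := by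
  have hr0 : 0 < r := hp.trans hpr
  set τ : ℝ := r/(2*p) with hτdef
  have hτ : 0 < τ := by positivity
  have hk1 : (1:ℝ) ≤ (k:ℝ) := by exact_mod_cast hk
  have hk0 : (0:ℝ) < (k:ℝ) := lt_of_lt_of_le one_pos hk1
  have hLk : 0 < Log k := Log_pos _
  have step : ∀ n ∈ Finset.Ico k N,
      Log n ^ r / (n:ℝ) ^ (r/p+1)
        ≤ (Log k ^ r * (1+2*p) ^ r * (k:ℝ) ^ (-τ)) * (n:ℝ) ^ (-(1+τ)) := by
    intro n hn
    rw [Finset.mem_Ico] at hn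
    have hkn : k ≤ n := hn.1
    have hn1 : (1:ℝ) ≤ (n:ℝ) := le_trans hk1 (by exact_mod_cast hkn)
    have hn0 : (0:ℝ) < (n:ℝ) := lt_of_lt_of_le one_pos hn1
    have hknR : (k:ℝ) ≤ (n:ℝ) := by exact_mod_cast hkn
    have hz : (1:ℝ) ≤ (n:ℝ)/(k:ℝ) := (one_le_div hk0).mpr hknR
    have h1 : Log n ≤ Log k * ((1+2*p) * ((n:ℝ)/(k:ℝ)) ^ (1/(2*p))) := by
      calc Log n ≤ Log k * (1 + Real.log ((n:ℝ)/(k:ℝ))) := Log_ratio hk1 hknR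
        _ ≤ Log k * ((1+2*p) * ((n:ℝ)/(k:ℝ)) ^ (1/(2*p))) := by
            apply mul_le_mul_of_nonneg_left _ hLk.le
            have := one_add_log_le hz (show (0:ℝ) < 1/(2*p) by positivity)
            calc 1 + Real.log ((n:ℝ)/(k:ℝ)) ≤ (1 + 1/(1/(2*p))) * ((n:ℝ)/(k:ℝ)) ^ (1/(2*p)) := this
              _ = (1+2*p) * ((n:ℝ)/(k:ℝ)) ^ (1/(2*p)) := by
                  congr 1
                  field_simp
    have h2 : Log n ^ r ≤ Log k ^ r * (1+2*p) ^ r * ((n:ℝ)/(k:ℝ)) ^ τ := by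
      have hnn : (0:ℝ) ≤ Log n := (Log_pos _).le
      have := Real.rpow_le_rpow hnn h1 hr0.le
      calc Log n ^ r ≤ (Log k * ((1+2*p) * ((n:ℝ)/(k:ℝ)) ^ (1/(2*p)))) ^ r := this
        _ = Log k ^ r * (1+2*p) ^ r * ((n:ℝ)/(k:ℝ)) ^ τ := by
            rw [Real.mul_rpow hLk.le (by positivity), Real.mul_rpow (by positivity) (by positivity),
              ← Real.rpow_mul (by positivity : (0:ℝ) ≤ (n:ℝ)/(k:ℝ))]
            have : 1/(2*p) * r = τ := by rw [hτdef]; ring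
            rw [this, mul_assoc]
    have h3 : ((n:ℝ)/(k:ℝ)) ^ τ = (n:ℝ) ^ τ * (k:ℝ) ^ (-τ) := by
      rw [Real.div_rpow (by positivity) hk0.le, Real.rpow_neg hk0.le, div_eq_mul_inv]
    have h4 : (n:ℝ) ^ τ / (n:ℝ) ^ (r/p+1) = (n:ℝ) ^ (-(1+τ)) := by
      rw [← Real.rpow_sub hn0]
      congr 1
      rw [hτdef]; field_simp; ring
    have h5 : 0 < (n:ℝ) ^ (r/p+1) := Real.rpow_pos_of_pos hn0 _
    calc Log n ^ r / (n:ℝ) ^ (r/p+1)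
        ≤ (Log k ^ r * (1+2*p) ^ r * ((n:ℝ)/(k:ℝ)) ^ τ) / (n:ℝ) ^ (r/p+1) := by
          exact div_le_div_of_nonneg_right h2 h5.le
      _ = (Log k ^ r * (1+2*p) ^ r * (k:ℝ) ^ (-τ)) * ((n:ℝ) ^ τ / (n:ℝ) ^ (r/p+1)) := by
          rw [h3]; ring
      _ = (Log k ^ r * (1+2*p) ^ r * (k:ℝ) ^ (-τ)) * (n:ℝ) ^ (-(1+τ)) := by rw [h4]
  calc ∑ n ∈ Finset.Ico k N, Log n ^ r / (n:ℝ) ^ (r/p+1)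
      ≤ ∑ n ∈ Finset.Ico k N, (Log k ^ r * (1+2*p) ^ r * (k:ℝ) ^ (-τ)) * (n:ℝ) ^ (-(1+τ)) :=
        Finset.sum_le_sum step
    _ = (Log k ^ r * (1+2*p) ^ r * (k:ℝ) ^ (-τ)) * ∑ n ∈ Finset.Ico k N, (n:ℝ) ^ (-(1+τ)) := by
        rw [Finset.mul_sum]
    _ ≤ (Log k ^ r * (1+2*p) ^ r * (k:ℝ) ^ (-τ)) * ((2 ^ (τ+1) / τ) * (k:ℝ) ^ (-τ)) := by
        apply mul_le_mul_of_nonneg_left (tail_sum hτ hk N)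
        positivity
    _ = ((1+2*p) ^ r * (2 ^ (τ+1) / τ)) * Log k ^ r * ((k:ℝ) ^ (-τ) * (k:ℝ) ^ (-τ)) := by ring
    _ = ((1+2*p) ^ r * (2 ^ (r/(2*p)+1) / (r/(2*p)))) * Log k ^ r * (k:ℝ) ^ (-(r/p)) := by
        rw [← Real.rpow_add hk0]
        congr 2
        rw [hτdef]; ring

lemma counting {p b : ℝ} (hp : 0 < p) (hb : 0 < b) :
    ∃ B : ℝ, 0 ≤ B ∧ ∀ x : ℝ, 0 ≤ x → ∀ K : ℕ,
      ∑ k ∈ Finset.Icc 1 K,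
        (if (k:ℝ) ^ (1/p) / Log k ^ b < x then Log k ^ (-(p*b)) else 0) ≤ B * x ^ p := by
  set q : ℝ := p * b with hqdef
  have hq : 0 < q := mul_pos hp hb
  set m : ℝ := min 1 p with hmdef
  have hm : 0 < m := lt_min one_pos hp
  set M₁ : ℝ := (1+2*q) ^ q * (1+2*q) ^ q with hM₁def
  have hM₁ : 0 < M₁ := by positivity
  set C₂ : ℝ := Log M₁ + 2*(p+1) with hC₂def
  have hC₂ : 0 < C₂ := by have := Log_pos M₁; positivity
  refine ⟨1 + C₂ ^ q * m ^ (-q), by positivity, ?_⟩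
  intro x hx K
  rcases eq_or_lt_of_le hx with h0 | hx0
  · rw [← h0, Real.zero_rpow hp.ne', mul_zero]
    apply le_of_eq
    apply Finset.sum_eq_zero
    intro k hk
    rw [Finset.mem_Icc] at hk
    have hk0 : (0:ℝ) < (k:ℝ) := by exact_mod_cast hk.1
    rw [if_neg]
    push_neg
    apply div_nonneg (Real.rpow_nonneg hk0.le _) (Real.rpow_nonneg (Log_pos _).le _)
  · have hxp : 0 < x ^ p := Real.rpow_pos_of_pos hx0 p
    have hLx : 0 < Log x := Log_pos x
    have hLx1 : 1 ≤ Log x := one_le_Log x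
    set K₀ : ℝ := C₂ ^ q * Log x ^ q * x ^ p with hK₀def
    -- termwise bound
    have key : ∀ k ∈ Finset.Icc 1 K,
        (if (k:ℝ) ^ (1/p) / Log k ^ b < x then Log k ^ (-(p*b)) else 0)
          ≤ (if (k:ℝ) ≤ x ^ p then (1:ℝ) else 0)
            + (if (k:ℝ) ≤ K₀ then m ^ (-q) * Log x ^ (-q) else 0) := by
      intro k hk
      rw [Finset.mem_Icc] at hk
      have hk1 : (1:ℝ) ≤ (k:ℝ) := by exact_mod_cast hk.1
      have hk0 : (0:ℝ) < (k:ℝ) := lt_of_lt_of_le one_pos hk1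
      have hLk : 0 < Log k := Log_pos _
      have hnn1 : (0:ℝ) ≤ if (k:ℝ) ≤ x ^ p then (1:ℝ) else 0 := by positivity
      have hnn2 : (0:ℝ) ≤ if (k:ℝ) ≤ K₀ then m ^ (-q) * Log x ^ (-q) else 0 := by positivity
      by_cases ht : (k:ℝ) ^ (1/p) / Log k ^ b < x
      swap
      · rw [if_neg ht]; positivity
      rw [if_pos ht]
      -- st1 : k < x^p * (Log k)^q
      have st1 : (k:ℝ) < x ^ p * Log k ^ q := by
        have h1 : (k:ℝ) ^ (1/p) < x * Log k ^ b := by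
          rw [div_lt_iff₀ (by positivity)] at ht
          exact ht
        have h2 := Real.rpow_lt_rpow (by positivity) h1 hp
        rw [← Real.rpow_mul hk0.le, one_div, inv_mul_cancel₀ hp.ne', Real.rpow_one,
          Real.mul_rpow hx0.le (by positivity), ← Real.rpow_mul hLk.le] at h2
        rw [hqdef]
        convert h2 using 3
        ring
      -- st2 : (Log k)^(-q) ≤ x^p / k
      have st2 : Log k ^ (-q) ≤ x ^ p / (k:ℝ) := by
        rw [Real.rpow_neg hLk.le, le_div_iff₀ hk0, mul_comm]
        have h3 : (0:ℝ) < Log k ^ q := Real.rpow_pos_of_pos hLk q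
        have h3' : Log k ^ q * (Log k ^ q)⁻¹ = 1 := mul_inv_cancel₀ h3.ne'
        nlinarith [mul_le_mul_of_nonneg_right st1.le (inv_nonneg.mpr h3.le)]
      -- st3 : (Log k)^q ≤ (1+2q)^q * k^(1/2)
      have st3 : Log k ^ q ≤ (1+2*q) ^ q * (k:ℝ) ^ ((1:ℝ)/2) := by
        have h4 : Log k ≤ (1 + 1/(1/(2*q))) * (k:ℝ) ^ (1/(2*q)) :=
          Log_le_rpow hk1 (by positivity)
        have h5 : Log k ≤ (1+2*q) * (k:ℝ) ^ (1/(2*q)) := by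
          convert h4 using 3
          field_simp
        calc Log k ^ q ≤ ((1+2*q) * (k:ℝ) ^ (1/(2*q))) ^ q :=
              Real.rpow_le_rpow hLk.le h5 hq.le
          _ = (1+2*q) ^ q * (k:ℝ) ^ ((1:ℝ)/2) := by
              rw [Real.mul_rpow (by positivity) (by positivity),
                ← Real.rpow_mul hk0.le]
              congr 2
              field_simp
      -- k < M₁ * x^p * x^p
      have st4a : (k:ℝ) < M₁ * (x ^ p * x ^ p) := by
        have hsq : (0:ℝ) ≤ (k:ℝ) ^ ((1:ℝ)/2) := Real.rpow_nonneg hk0.le _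
        have hkk : (k:ℝ) ^ ((1:ℝ)/2) * (k:ℝ) ^ ((1:ℝ)/2) = (k:ℝ) := by
          rw [← Real.rpow_add hk0]
          norm_num
        have h6 : (k:ℝ) < (x ^ p * (1+2*q) ^ q) * (k:ℝ) ^ ((1:ℝ)/2) := by
          calc (k:ℝ) < x ^ p * Log k ^ q := st1
            _ ≤ x ^ p * ((1+2*q) ^ q * (k:ℝ) ^ ((1:ℝ)/2)) :=
                mul_le_mul_of_nonneg_left st3 hxp.le
            _ = (x ^ p * (1+2*q) ^ q) * (k:ℝ) ^ ((1:ℝ)/2) := by ring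
        have h7 : (k:ℝ) ^ ((1:ℝ)/2) < x ^ p * (1+2*q) ^ q := by
          have hsq0 : (0:ℝ) < (k:ℝ) ^ ((1:ℝ)/2) := Real.rpow_pos_of_pos hk0 _
          by_contra h8
          push_neg at h8
          have := mul_le_mul_of_nonneg_right h8 hsq
          rw [hkk] at this
          linarith
        calc (k:ℝ) = (k:ℝ) ^ ((1:ℝ)/2) * (k:ℝ) ^ ((1:ℝ)/2) := hkk.symm
          _ < (x ^ p * (1+2*q) ^ q) * (x ^ p * (1+2*q) ^ q) := by
              apply mul_lt_mul'' h7 h7 hsq hsq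
          _ = M₁ * (x ^ p * x ^ p) := by rw [hM₁def]; ring
      -- st4 : Log k ≤ C₂ * Log x
      have st4 : Log k ≤ C₂ * Log x := by
        have h9 : Log k ≤ Log (M₁ * (x ^ p * x ^ p)) := Log_mono st4a.le
        have h10 : Log (M₁ * (x ^ p * x ^ p)) ≤ Log M₁ + (Log (x ^ p) + Log (x ^ p)) := by
          calc Log (M₁ * (x ^ p * x ^ p)) ≤ Log M₁ + Log (x ^ p * x ^ p) :=
                Log_mul_le hM₁ (by positivity)
            _ ≤ Log M₁ + (Log (x ^ p) + Log (x ^ p)) := by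
                have := Log_mul_le hxp hxp
                linarith
      -- Log (x^p) ≤ (p+1) Log x
        have h11 : Log (x ^ p) ≤ (p+1) * Log x := Log_rpow_le hx0 hp
        have h12 : Log M₁ ≤ Log M₁ * Log x :=
          le_mul_of_one_le_right (Log_pos M₁).le hLx1
        have h13 : 0 ≤ Log x := hLx.le
        calc Log k ≤ Log M₁ + (Log (x ^ p) + Log (x ^ p)) := h9.trans h10
          _ ≤ Log M₁ * Log x + ((p+1) * Log x + (p+1) * Log x) := by
              apply add_le_add h12 (add_le_add h11 h11)
          _ = (Log M₁ + 2*(p+1)) * Log x := by ring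
          _ = C₂ * Log x := by rw [hC₂def]
      by_cases hkx : (k:ℝ) ≤ x ^ p
      · rw [if_pos hkx]
        have : Log k ^ (-(p*b)) ≤ 1 := by
          rw [← hqdef, Real.rpow_neg hLk.le]
          have h13 : (1:ℝ) ≤ Log k ^ q := Real.one_le_rpow (one_le_Log k) hq.le
          exact inv_le_one_of_one_le₀ h13
        linarith
      · push_neg at hkx
        rw [if_neg (not_le.mpr hkx)]
        -- k ≤ K₀
        have hkK₀ : (k:ℝ) ≤ K₀ := by
          have h14 : Log k ^ q ≤ C₂ ^ q * Log x ^ q := by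
            calc Log k ^ q ≤ (C₂ * Log x) ^ q :=
                  Real.rpow_le_rpow hLk.le st4 hq.le
              _ = C₂ ^ q * Log x ^ q := Real.mul_rpow hC₂.le hLx.le
          calc (k:ℝ) ≤ x ^ p * Log k ^ q := st1.le
            _ ≤ x ^ p * (C₂ ^ q * Log x ^ q) := mul_le_mul_of_nonneg_left h14 hxp.le
            _ = K₀ := by rw [hK₀def]; ring
        rw [if_pos hkK₀]
        -- st6 : m * Log x ≤ Log k
        have st6 : m * Log x ≤ Log k := by
          rcases le_or_gt x (Real.exp 1) with hxe | hxe
          · have : Log x = 1 := by unfold Log; rw [max_eq_right hxe, Real.log_exp]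
            rw [this, mul_one]
            calc m ≤ 1 := min_le_left _ _
              _ ≤ Log k := one_le_Log k
          · have hLxlog : Log x = Real.log x := by unfold Log; rw [max_eq_left hxe.le]
            have hx1 : 1 < x := lt_trans (by nlinarith [Real.exp_one_gt_d9]) hxe
            have hlx0 : 0 ≤ Real.log x := Real.log_nonneg hx1.le
            have h15 : x ^ p ≤ (k:ℝ) := hkx.le
            have h16 : p * Real.log x ≤ Real.log k := by
              rw [← Real.log_rpow hx0]
              exact Real.log_le_log (Real.rpow_pos_of_pos hx0 p) h15
            have h17 : Real.log (k:ℝ) ≤ Log k := log_le_Log hk0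
            rw [hLxlog]
            calc m * Real.log x ≤ p * Real.log x := by
                  apply mul_le_mul_of_nonneg_right (min_le_right 1 p) hlx0
              _ ≤ Log k := le_trans h16 h17
        -- conclude
        rw [← hqdef]
        have hmLx : 0 < m * Log x := mul_pos hm hLx
        calc Log k ^ (-q) ≤ (m * Log x) ^ (-q) := by
              apply Real.rpow_le_rpow_of_nonpos hmLx st6 (neg_nonpos.mpr hq.le)
          _ = m ^ (-q) * Log x ^ (-q) := Real.mul_rpow hm.le hLx.le
        linarith
    -- sum the bound
    calc ∑ k ∈ Finset.Icc 1 K, (if (k:ℝ) ^ (1/p) / Log k ^ b < x then Log k ^ (-(p*b)) else 0)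
        ≤ ∑ k ∈ Finset.Icc 1 K, ((if (k:ℝ) ≤ x ^ p then (1:ℝ) else 0)
            + (if (k:ℝ) ≤ K₀ then m ^ (-q) * Log x ^ (-q) else 0)) := Finset.sum_le_sum key
      _ = (∑ k ∈ Finset.Icc 1 K, if (k:ℝ) ≤ x ^ p then (1:ℝ) else 0)
            + ∑ k ∈ Finset.Icc 1 K, (if (k:ℝ) ≤ K₀ then m ^ (-q) * Log x ^ (-q) else 0) :=
          Finset.sum_add_distrib
      _ ≤ x ^ p + K₀ * (m ^ (-q) * Log x ^ (-q)) := by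
          have hK₀nn : 0 ≤ K₀ := by
            rw [hK₀def]
            positivity
          have hcnn : (0:ℝ) ≤ m ^ (-q) * Log x ^ (-q) := by positivity
          apply add_le_add
          · rw [Finset.sum_boole]
            have hsub : (Finset.Icc 1 K).filter (fun k : ℕ => (k:ℝ) ≤ x ^ p)
                ⊆ Finset.Icc 1 (Nat.floor (x ^ p)) := by
              intro k hk
              rw [Finset.mem_filter, Finset.mem_Icc] at hk
              rw [Finset.mem_Icc]
              exact ⟨hk.1.1, Nat.le_floor hk.2⟩
            have hcard := Finset.card_le_card hsub
            rw [Nat.card_Icc] at hcard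
            calc (((Finset.Icc 1 K).filter (fun k : ℕ => (k:ℝ) ≤ x ^ p)).card : ℝ)
                ≤ (Nat.floor (x ^ p) + 1 - 1 : ℕ) := by exact_mod_cast hcard
              _ ≤ x ^ p := by
                  simp only [Nat.add_sub_cancel]
                  exact Nat.floor_le hxp.le
          · rw [← Finset.sum_filter]
            rw [Finset.sum_const, nsmul_eq_mul]
            have hsub : (Finset.Icc 1 K).filter (fun k : ℕ => (k:ℝ) ≤ K₀)
                ⊆ Finset.Icc 1 (Nat.floor K₀) := by
              intro k hk
              rw [Finset.mem_filter, Finset.mem_Icc] at hk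
              rw [Finset.mem_Icc]
              exact ⟨hk.1.1, Nat.le_floor hk.2⟩
            have hcard := Finset.card_le_card hsub
            rw [Nat.card_Icc] at hcard
            apply mul_le_mul_of_nonneg_right _ hcnn
            calc (((Finset.Icc 1 K).filter (fun k : ℕ => (k:ℝ) ≤ K₀)).card : ℝ)
                ≤ (Nat.floor K₀ + 1 - 1 : ℕ) := by exact_mod_cast hcard
              _ ≤ K₀ := by
                  simp only [Nat.add_sub_cancel]
                  exact Nat.floor_le hK₀nn
      _ = (1 + C₂ ^ q * m ^ (-q)) * x ^ p := by
          rw [hK₀def]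
          have hh : Log x ^ q * Log x ^ (-q) = 1 := by
            rw [← Real.rpow_add hLx]
            norm_num
          linear_combination (C₂ ^ q * x ^ p * m ^ (-q)) * hh

lemma sum_swap' (f : ℕ → ℕ → ℝ) (N : ℕ) :
    ∑ n ∈ Finset.range N, ∑ k ∈ Finset.Icc 1 n, f n k
      = ∑ k ∈ Finset.Icc 1 N, ∑ n ∈ Finset.Ico k N, f n k := by
  induction N with
  | zero => simp
  | succ N ih =>
    rw [Finset.sum_range_succ, ih, Finset.sum_Icc_succ_top (Nat.one_le_iff_ne_zero.mpr (Nat.succ_ne_zero N))]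
    rw [Finset.Ico_self, Finset.sum_empty, add_zero]
    rw [← Finset.sum_add_distrib]
    apply Finset.sum_congr rfl
    intro k hk
    rw [Finset.mem_Icc] at hk
    rw [Finset.sum_Ico_succ_top hk.2]

theorem stmt_8 {Ω : Type*} [MeasurableSpace Ω] (μ : Measure Ω) [IsProbabilityMeasure μ]
    (X : ℕ → Ω → ℝ) (Xd : Ω → ℝ) (hXm : ∀ n, Measurable (X n)) (hXdm : Measurable Xd)
    (C : ℝ) (hC : 0 < C)
    (hdom : ∀ n : ℕ, ∀ t : ℝ, 0 < t →
      (μ {ω | t < |X n ω|}).toReal ≤ C * (μ {ω | t < |Xd ω|}).toReal)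
    (p : ℝ) (hp0 : 0 < p) (hp2 : p < 2)
    (hXp : Integrable (fun ω => |Xd ω| ^ p) μ)
    (φ : ℝ → ℝ) (hφm : Measurable φ) (hφ : ∀ x : ℝ, |φ x| ≤ |x|)
    (r : ℝ) (hr : p < r) :
    Summable (fun n : ℕ => ∑ k ∈ Finset.Icc 1 n,
      (k : ℝ) ^ (r / p) * Log n ^ r / ((n : ℝ) ^ (r / p + 1) * Log k ^ (r ^ 2 / (r - p))) *
        (μ {ω | (k : ℝ) ^ (1 / p) / Log k ^ (r / (r - p)) < |φ (X k ω)|}).toReal) := by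
  have hr0 : 0 < r := hp0.trans hr
  have hrp : 0 < r - p := sub_pos.mpr hr
  have hb : 0 < r / (r - p) := div_pos hr0 hrp
  obtain ⟨B, hB0, hBcount⟩ := counting (p := p) (b := r / (r - p)) hp0 hb
  -- notation
  set b : ℝ := r / (r - p) with hbdef
  set τ : ℝ := r / (2 * p) with hτdef
  have hτ : 0 < τ := by positivity
  set D₀ : ℝ := (1 + 2 * p) ^ r * (2 ^ (τ + 1) / τ) with hD₀def
  have hD₀ : 0 ≤ D₀ := by positivity
  set t : ℕ → ℝ := fun k => (k : ℝ) ^ (1 / p) / Log k ^ b with htdef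
  set P : ℕ → ℝ := fun k => (μ {ω | t k < |φ (X k ω)|}).toReal with hPdef
  set Q : ℕ → ℝ := fun k => (μ {ω | t k < |Xd ω|}).toReal with hQdef
  set I : ℝ := ∫ ω, |Xd ω| ^ p ∂μ with hIdef
  have hI0 : 0 ≤ I := integral_nonneg fun ω => Real.rpow_nonneg (abs_nonneg _) _
  have hPnn : ∀ k, 0 ≤ P k := fun k => ENNReal.toReal_nonneg
  have hQnn : ∀ k, 0 ≤ Q k := fun k => ENNReal.toReal_nonneg
  have htpos : ∀ k : ℕ, 1 ≤ k → 0 < t k := by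
    intro k hk
    have hk0 : (0:ℝ) < (k:ℝ) := by exact_mod_cast hk
    exact div_pos (Real.rpow_pos_of_pos hk0 _) (Real.rpow_pos_of_pos (Log_pos _) _)
  -- domination
  have hdomk : ∀ k : ℕ, 1 ≤ k → P k ≤ C * Q k := by
    intro k hk
    have hsub : {ω | t k < |φ (X k ω)|} ⊆ {ω | t k < |X k ω|} := by
      intro ω hω
      exact lt_of_lt_of_le hω (hφ _)
    have h1 : P k ≤ (μ {ω | t k < |X k ω|}).toReal :=
      ENNReal.toReal_mono (measure_ne_top μ _) (measure_mono hsub)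
    exact h1.trans (hdom k (t k) (htpos k hk))
  -- layer cake
  have hBmeas : ∀ k : ℕ, MeasurableSet {ω | t k < |Xd ω|} := fun k =>
    measurableSet_lt measurable_const hXdm.abs
  have hlayer : ∀ K : ℕ, ∑ k ∈ Finset.Icc 1 K, Log k ^ (-(p * b)) * Q k ≤ B * I := by
    intro K
    have hint : ∀ k ∈ Finset.Icc 1 K,
        Integrable (fun ω => Log k ^ (-(p * b)) * Set.indicator {ω | t k < |Xd ω|} 1 ω) μ :=
      fun k _ => ((integrable_const (1:ℝ)).indicator (hBmeas k)).const_mul _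
    have heq : ∑ k ∈ Finset.Icc 1 K, Log k ^ (-(p * b)) * Q k
        = ∫ ω, ∑ k ∈ Finset.Icc 1 K,
            Log k ^ (-(p * b)) * Set.indicator {ω | t k < |Xd ω|} 1 ω ∂μ := by
      rw [integral_finset_sum _ hint]
      apply Finset.sum_congr rfl
      intro k _
      rw [integral_const_mul, MeasureTheory.integral_indicator_one (hBmeas k)]
      rfl
    rw [heq]
    have hmono : ∀ ω, ∑ k ∈ Finset.Icc 1 K,
        Log k ^ (-(p * b)) * Set.indicator {ω | t k < |Xd ω|} 1 ω ≤ B * |Xd ω| ^ p := by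
      intro ω
      have hptw : ∑ k ∈ Finset.Icc 1 K,
          Log k ^ (-(p * b)) * Set.indicator {ω | t k < |Xd ω|} 1 ω
          = ∑ k ∈ Finset.Icc 1 K,
            (if (k:ℝ) ^ (1/p) / Log k ^ b < |Xd ω| then Log k ^ (-(p * b)) else 0) := by
        apply Finset.sum_congr rfl
        intro k _
        rw [Set.indicator_apply]
        by_cases h : ω ∈ {ω | t k < |Xd ω|}
        · rw [if_pos h, if_pos (by exact h), Pi.one_apply, mul_one]
        · rw [if_neg h, if_neg (by exact h), mul_zero]
      rw [hptw]
      exact hBcount (|Xd ω|) (abs_nonneg _) K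
    calc ∫ ω, ∑ k ∈ Finset.Icc 1 K,
            Log k ^ (-(p * b)) * Set.indicator {ω | t k < |Xd ω|} 1 ω ∂μ
        ≤ ∫ ω, B * |Xd ω| ^ p ∂μ := by
          apply integral_mono (integrable_finset_sum _ hint) (hXp.const_mul B) hmono
      _ = B * I := by rw [integral_const_mul]
  -- per-k tail bound
  have hperk : ∀ k : ℕ, 1 ≤ k → ∀ N : ℕ,
      ∑ n ∈ Finset.Ico k N,
        (k : ℝ) ^ (r / p) * Log n ^ r / ((n : ℝ) ^ (r / p + 1) * Log k ^ (r ^ 2 / (r - p))) * P k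
      ≤ D₀ * (Log k ^ (-(p * b)) * P k) := by
    intro k hk N
    have hk1 : (1:ℝ) ≤ (k:ℝ) := by exact_mod_cast hk
    have hk0 : (0:ℝ) < (k:ℝ) := lt_of_lt_of_le one_pos hk1
    have hLk : 0 < Log k := Log_pos _
    have hpre : (0:ℝ) ≤ (k : ℝ) ^ (r / p) * (Log k ^ (r ^ 2 / (r - p)))⁻¹ * P k := by
      have := hPnn k
      positivity
    calc ∑ n ∈ Finset.Ico k N,
          (k : ℝ) ^ (r / p) * Log n ^ r / ((n : ℝ) ^ (r / p + 1) * Log k ^ (r ^ 2 / (r - p))) * P k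
        = ((k : ℝ) ^ (r / p) * (Log k ^ (r ^ 2 / (r - p)))⁻¹ * P k)
            * ∑ n ∈ Finset.Ico k N, Log n ^ r / (n : ℝ) ^ (r / p + 1) := by
          rw [Finset.mul_sum]
          apply Finset.sum_congr rfl
          intro n _
          ring
      _ ≤ ((k : ℝ) ^ (r / p) * (Log k ^ (r ^ 2 / (r - p)))⁻¹ * P k)
            * (((1 + 2 * p) ^ r * (2 ^ (τ + 1) / τ)) * Log k ^ r * (k:ℝ) ^ (-(r/p))) := by
          apply mul_le_mul_of_nonneg_left _ hpre
          rw [hτdef]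
          exact Stail hp0 hr hk N
      _ = D₀ * (Log k ^ (-(p * b)) * P k) := by
          have e1 : (k:ℝ) ^ (r/p) * (k:ℝ) ^ (-(r/p)) = 1 := by
            rw [← Real.rpow_add hk0]
            simp
          have e2 : (Log k ^ (r ^ 2 / (r - p)))⁻¹ * Log k ^ r = Log k ^ (-(p * b)) := by
            rw [← Real.rpow_neg hLk.le, ← Real.rpow_add hLk]
            congr 1
            rw [hbdef]
            field_simp
            ring
          calc ((k : ℝ) ^ (r / p) * (Log k ^ (r ^ 2 / (r - p)))⁻¹ * P k)
              * (((1 + 2 * p) ^ r * (2 ^ (τ + 1) / τ)) * Log k ^ r * (k:ℝ) ^ (-(r/p)))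
              = D₀ * ((k:ℝ) ^ (r/p) * (k:ℝ) ^ (-(r/p)))
                  * ((Log k ^ (r ^ 2 / (r - p)))⁻¹ * Log k ^ r) * P k := by
                rw [hD₀def]; ring
            _ = D₀ * (Log k ^ (-(p * b)) * P k) := by rw [e1, e2]; ring
  -- assemble
  apply summable_of_sum_range_le (c := D₀ * C * (B * I))
  · intro n
    apply Finset.sum_nonneg
    intro k _
    have h1 : (0:ℝ) ≤ (k : ℝ) ^ (r / p) * Log n ^ r := by
      have := (Log_pos (n:ℝ)).le
      positivity
    have h2 : (0:ℝ) ≤ (n : ℝ) ^ (r / p + 1) * Log k ^ (r ^ 2 / (r - p)) := by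
      have := (Log_pos (k:ℝ)).le
      positivity
    exact mul_nonneg (div_nonneg h1 h2) (hPnn k)
  · intro N
    rw [sum_swap']
    calc ∑ k ∈ Finset.Icc 1 N, ∑ n ∈ Finset.Ico k N,
          (k : ℝ) ^ (r / p) * Log n ^ r / ((n : ℝ) ^ (r / p + 1) * Log k ^ (r ^ 2 / (r - p))) * P k
        ≤ ∑ k ∈ Finset.Icc 1 N, D₀ * (Log k ^ (-(p * b)) * P k) := by
          apply Finset.sum_le_sum
          intro k hk
          rw [Finset.mem_Icc] at hk
          exact hperk k hk.1 N
      _ ≤ ∑ k ∈ Finset.Icc 1 N, D₀ * C * (Log k ^ (-(p * b)) * Q k) := by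
          apply Finset.sum_le_sum
          intro k hk
          rw [Finset.mem_Icc] at hk
          have hLknn : (0:ℝ) ≤ Log k ^ (-(p * b)) := Real.rpow_nonneg (Log_pos _).le _
          have := hdomk k hk.1
          calc D₀ * (Log k ^ (-(p * b)) * P k) ≤ D₀ * (Log k ^ (-(p * b)) * (C * Q k)) := by
                apply mul_le_mul_of_nonneg_left _ hD₀
                exact mul_le_mul_of_nonneg_left this hLknn
            _ = D₀ * C * (Log k ^ (-(p * b)) * Q k) := by ring
      _ = D₀ * C * ∑ k ∈ Finset.Icc 1 N, Log k ^ (-(p * b)) * Q k := by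
          rw [Finset.mul_sum]
      _ ≤ D₀ * C * (B * I) := by
          apply mul_le_mul_of_nonneg_left (hlayer N) (by positivity)
end

section
/- If X and Y are negatively quadrant dependent random variables with finite expectations and XY integrable, then E(XY) ≤ E(X)·E(Y), i.e., Cov(X,Y) ≤ 0. -/
open MeasureTheory Set Filter

noncomputable def gg (u v : ℝ) : ℝ → ℝ := fun t =>
  (Ici v).indicator (fun _ => (1:ℝ)) t - (Ici u).indicator (fun _ => (1:ℝ)) t

lemma gg_eq (u v : ℝ) (h : v ≤ u) :
    gg u v = (Ico v u).indicator (fun _ => (1:ℝ)) := by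
  funext t
  simp only [gg, indicator_apply, mem_Ici, mem_Ico]
  split_ifs <;> simp_all <;> linarith

lemma gg_neg (u v : ℝ) : gg u v = fun t => - gg v u t := by
  funext t; simp [gg]

lemma integrable_ico_ind (a b : ℝ) :
    Integrable ((Ico a b).indicator (fun _ => (1:ℝ))) := by
  rw [integrable_indicator_iff measurableSet_Ico]
  exact integrableOn_const measure_Ico_lt_top.ne

lemma gg_integrable (u v : ℝ) : Integrable (gg u v) := by
  rcases le_total v u with h | h
  · rw [gg_eq u v h]; exact integrable_ico_ind v u
  · rw [gg_neg]; exact (by rw [gg_eq v u h]; exact integrable_ico_ind u v : Integrable (gg v u)).neg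

lemma integral_ico_ind (a b : ℝ) (h : a ≤ b) :
    ∫ t, (Ico a b).indicator (fun _ => (1:ℝ)) t = b - a := by
  rw [MeasureTheory.integral_indicator_const (1:ℝ) measurableSet_Ico]
  simp [Real.volume_Ico, ENNReal.toReal_ofReal (by linarith : (0:ℝ) ≤ b - a)]
  exact h

lemma gg_integral (u v : ℝ) : ∫ t, gg u v t = u - v := by
  rcases le_total v u with h | h
  · rw [gg_eq u v h]; rw [integral_ico_ind v u h]
  · rw [gg_neg, integral_neg, gg_eq v u h, integral_ico_ind u v h]; ring

lemma gg_abs (u v : ℝ) : (fun t => |gg u v t|) = gg (max u v) (min u v) := by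
  rcases le_total v u with h | h
  · rw [max_eq_left h, min_eq_right h]; funext t
    rw [gg_eq u v h]
    simp [indicator_apply]; split_ifs <;> norm_num
  · rw [max_eq_right h, min_eq_left h]; funext t
    rw [gg_neg, abs_neg, gg_eq v u h]
    simp [indicator_apply]; split_ifs <;> norm_num

lemma gg_abs_integral (u v : ℝ) : ∫ t, |gg u v t| = |u - v| := by
  rw [gg_abs, gg_integral]
  rcases le_total v u with h | h
  · rw [max_eq_left h, min_eq_right h, abs_of_nonneg (by linarith)]
  · rw [max_eq_right h, min_eq_left h, abs_of_nonpos (by linarith)]; ring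

lemma meas_ind {α : Type*} [MeasurableSpace α] {φ ψ : α → ℝ}
    (hφ : Measurable φ) (hψ : Measurable ψ) :
    Measurable (fun r => (Ici (φ r)).indicator (fun _ => (1:ℝ)) (ψ r)) := by
  have h : (fun r => (Ici (φ r)).indicator (fun _ => (1:ℝ)) (ψ r))
      = fun r => if φ r ≤ ψ r then (1:ℝ) else 0 := by
    funext r; simp [indicator_apply]
  rw [h]
  exact Measurable.ite (measurableSet_le hφ hψ) measurable_const measurable_const

lemma int_ind {Ω : Type*} [MeasurableSpace Ω] (μ : Measure Ω) [IsFiniteMeasure μ]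
    {S : Set Ω} (hS : MeasurableSet S) :
    Integrable (S.indicator (fun _ => (1:ℝ))) μ := by
  rw [integrable_indicator_iff hS]
  exact integrableOn_const (measure_lt_top μ S).ne

lemma integral_ind {Ω : Type*} [MeasurableSpace Ω] (μ : Measure Ω)
    {S : Set Ω} (hS : MeasurableSet S) :
    ∫ a, S.indicator (fun _ => (1:ℝ)) a ∂μ = (μ S).toReal := by
  rw [MeasureTheory.integral_indicator_const (1:ℝ) hS]; simp; rfl

theorem stmt_12 {Ω : Type*} [MeasurableSpace Ω] (μ : Measure Ω) [IsProbabilityMeasure μ]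
    (X Y : Ω → ℝ) (hXm : Measurable X) (hYm : Measurable Y)
    (hX : Integrable X μ) (hY : Integrable Y μ)
    (hXY : Integrable (fun ω => X ω * Y ω) μ)
    (hNQD : ∀ x y : ℝ,
      μ {ω | X ω ≤ x ∧ Y ω ≤ y} ≤ μ {ω | X ω ≤ x} * μ {ω | Y ω ≤ y}) :
    ∫ ω, X ω * Y ω ∂μ ≤ (∫ ω, X ω ∂μ) * ∫ ω, Y ω ∂μ := by
  set P : Measure (Ω × Ω) := μ.prod μ with hP
  -- indicator functions
  set IX : ℝ → Ω → ℝ := fun s a => ({a | X a ≤ s}).indicator (fun _ => (1:ℝ)) a with hIX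
  set IY : ℝ → Ω → ℝ := fun t a => ({a | Y a ≤ t}).indicator (fun _ => (1:ℝ)) a with hIY
  have hIXint : ∀ s, Integrable (IX s) μ := fun s => int_ind μ (hXm measurableSet_Iic)
  have hIYint : ∀ t, Integrable (IY t) μ := fun t => int_ind μ (hYm measurableSet_Iic)
  -- the two-variable function
  set f : (Ω × Ω) → (ℝ × ℝ) → ℝ := fun p q =>
    gg (X p.1) (X p.2) q.1 * gg (Y p.1) (Y p.2) q.2 with hf
  -- step 1 : inner integral over ℝ²
  have step1 : ∀ p : Ω × Ω, ∫ q : ℝ × ℝ, f p q = (X p.1 - X p.2) * (Y p.1 - Y p.2) := by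
    intro p
    rw [Measure.volume_eq_prod, hf]
    rw [integral_prod_mul (gg (X p.1) (X p.2)) (gg (Y p.1) (Y p.2)),
      gg_integral, gg_integral]
  -- integrability of (X₁-X₂)(Y₁-Y₂) pieces on P
  have i11 : Integrable (fun p : Ω × Ω => X p.1 * Y p.1) P := by
    have := Integrable.mul_prod (μ := μ) (ν := μ) hXY (integrable_const (1:ℝ))
    simpa using this
  have i22 : Integrable (fun p : Ω × Ω => X p.2 * Y p.2) P := by
    have := Integrable.mul_prod (μ := μ) (ν := μ) (integrable_const (1:ℝ)) hXY
    simpa using this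
  have i12 : Integrable (fun p : Ω × Ω => X p.1 * Y p.2) P :=
    Integrable.mul_prod hX hY
  have i21 : Integrable (fun p : Ω × Ω => X p.2 * Y p.1) P := by
    have := Integrable.mul_prod (μ := μ) (ν := μ) hY hX
    exact this.congr (Eventually.of_forall fun p => by ring)
  have iprod : Integrable (fun p : Ω × Ω => (X p.1 - X p.2) * (Y p.1 - Y p.2)) P := by
    have h1 : (fun p : Ω × Ω => (X p.1 - X p.2) * (Y p.1 - Y p.2))
        = fun p => X p.1 * Y p.1 + X p.2 * Y p.2 - (X p.1 * Y p.2 + X p.2 * Y p.1) := by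
      funext p; ring
    rw [h1]
    exact ((i11.add i22).sub (i12.add i21))
  -- step 2 : integrability of uncurry f
  have step2 : Integrable (Function.uncurry f) (P.prod volume) := by
    have hmeas : Measurable (Function.uncurry f) := by
      have h1 : Measurable (fun r : (Ω × Ω) × (ℝ × ℝ) =>
          (Ici (X r.1.2)).indicator (fun _ => (1:ℝ)) r.2.1) :=
        meas_ind (hXm.comp (measurable_fst.snd)) (measurable_snd.fst)
      have h2 : Measurable (fun r : (Ω × Ω) × (ℝ × ℝ) =>
          (Ici (X r.1.1)).indicator (fun _ => (1:ℝ)) r.2.1) :=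
        meas_ind (hXm.comp (measurable_fst.fst)) (measurable_snd.fst)
      have h3 : Measurable (fun r : (Ω × Ω) × (ℝ × ℝ) =>
          (Ici (Y r.1.2)).indicator (fun _ => (1:ℝ)) r.2.2) :=
        meas_ind (hYm.comp (measurable_fst.snd)) (measurable_snd.snd)
      have h4 : Measurable (fun r : (Ω × Ω) × (ℝ × ℝ) =>
          (Ici (Y r.1.1)).indicator (fun _ => (1:ℝ)) r.2.2) :=
        meas_ind (hYm.comp (measurable_fst.fst)) (measurable_snd.snd)
      exact ((h1.sub h2).mul (h3.sub h4))
    refine (integrable_prod_iff hmeas.aestronglyMeasurable).2 ⟨?_, ?_⟩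
    · refine Eventually.of_forall fun p => ?_
      have : (fun q : ℝ × ℝ => Function.uncurry f (p, q))
          = fun q : ℝ × ℝ => gg (X p.1) (X p.2) q.1 * gg (Y p.1) (Y p.2) q.2 := rfl
      rw [this, Measure.volume_eq_prod]
      exact Integrable.mul_prod (gg_integrable _ _) (gg_integrable _ _)
    · have hval : (fun p : Ω × Ω => ∫ q : ℝ × ℝ, ‖Function.uncurry f (p, q)‖)
          = fun p : Ω × Ω => |(X p.1 - X p.2) * (Y p.1 - Y p.2)| := by
        funext p
        have : (fun q : ℝ × ℝ => ‖Function.uncurry f (p, q)‖)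
            = fun q : ℝ × ℝ => |gg (X p.1) (X p.2) q.1| * |gg (Y p.1) (Y p.2) q.2| := by
          funext q
          simp [Function.uncurry, hf, Real.norm_eq_abs, abs_mul]
        rw [this, Measure.volume_eq_prod,
          integral_prod_mul (fun s => |gg (X p.1) (X p.2) s|) (fun t => |gg (Y p.1) (Y p.2) t|)]
        rw [gg_abs_integral, gg_abs_integral, abs_mul]
      rw [hval]
      exact iprod.abs
  -- step 3+4 : the inner Ω² integral for fixed q is ≤ 0
  have step4 : ∀ q : ℝ × ℝ, ∫ p, f p q ∂P ≤ 0 := by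
    intro q
    obtain ⟨s, t⟩ := q
    have hSX : MeasurableSet {a | X a ≤ s} := hXm measurableSet_Iic
    have hSY : MeasurableSet {a | Y a ≤ t} := hYm measurableSet_Iic
    have hfq : (fun p : Ω × Ω => f p (s, t))
        = fun p => IX s p.2 * IY t p.2 + IX s p.1 * IY t p.1
            - (IX s p.1 * IY t p.2 + IX s p.2 * IY t p.1) := by
      funext p
      simp only [hf, gg, hIX, hIY, indicator_apply, mem_Ici, mem_setOf_eq]
      ring
    have hand : MeasurableSet {a | X a ≤ s ∧ Y a ≤ t} := by
      rw [Set.setOf_and]; exact hSX.inter hSY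
    have hprodind : (fun a => IX s a * IY t a)
        = ({a | X a ≤ s ∧ Y a ≤ t}).indicator (fun _ => (1:ℝ)) := by
      funext a
      simp only [hIX, hIY, indicator_apply, mem_setOf_eq]
      split_ifs <;> simp_all
    have jint : Integrable (fun a => IX s a * IY t a) μ := by
      rw [hprodind]; exact int_ind μ hand
    have j22 : Integrable (fun p : Ω × Ω => IX s p.2 * IY t p.2) P := by
      have := Integrable.mul_prod (μ := μ) (ν := μ) (integrable_const (1:ℝ)) jint
      simpa using this
    have j11 : Integrable (fun p : Ω × Ω => IX s p.1 * IY t p.1) P := by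
      have := Integrable.mul_prod (μ := μ) (ν := μ) jint (integrable_const (1:ℝ))
      simpa using this
    have j12 : Integrable (fun p : Ω × Ω => IX s p.1 * IY t p.2) P :=
      Integrable.mul_prod (hIXint s) (hIYint t)
    have j21 : Integrable (fun p : Ω × Ω => IX s p.2 * IY t p.1) P :=
      (Integrable.mul_prod (hIYint t) (hIXint s)).congr
        (Eventually.of_forall fun p => by ring)
    have v22 : ∫ p, IX s p.2 * IY t p.2 ∂P = (μ {a | X a ≤ s ∧ Y a ≤ t}).toReal := by
      have h1 : (fun p : Ω × Ω => IX s p.2 * IY t p.2)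
          = fun z : Ω × Ω => (fun _ : Ω => (1:ℝ)) z.1 * (fun a => IX s a * IY t a) z.2 := by
        funext p; simp
      rw [hP, h1, integral_prod_mul (fun _ : Ω => (1:ℝ)) (fun a => IX s a * IY t a),
        hprodind, integral_ind μ hand]
      simp
    have v11 : ∫ p, IX s p.1 * IY t p.1 ∂P = (μ {a | X a ≤ s ∧ Y a ≤ t}).toReal := by
      have h1 : (fun p : Ω × Ω => IX s p.1 * IY t p.1)
          = fun z : Ω × Ω => (fun a => IX s a * IY t a) z.1 * (fun _ : Ω => (1:ℝ)) z.2 := by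
        funext p; simp
      rw [hP, h1, integral_prod_mul (fun a => IX s a * IY t a) (fun _ : Ω => (1:ℝ)),
        hprodind, integral_ind μ hand]
      simp
    have hIXval : ∫ a, IX s a ∂μ = (μ {a | X a ≤ s}).toReal := by
      simp only [hIX]; exact integral_ind μ hSX
    have hIYval : ∫ a, IY t a ∂μ = (μ {a | Y a ≤ t}).toReal := by
      simp only [hIY]; exact integral_ind μ hSY
    have v12 : ∫ p, IX s p.1 * IY t p.2 ∂P
        = (μ {a | X a ≤ s}).toReal * (μ {a | Y a ≤ t}).toReal := by
      rw [hP, integral_prod_mul (IX s) (IY t), hIXval, hIYval]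
    have v21 : ∫ p, IX s p.2 * IY t p.1 ∂P
        = (μ {a | X a ≤ s}).toReal * (μ {a | Y a ≤ t}).toReal := by
      have h1 : (fun p : Ω × Ω => IX s p.2 * IY t p.1)
          = fun z : Ω × Ω => IY t z.1 * IX s z.2 := by funext p; ring
      rw [hP, h1, integral_prod_mul (IY t) (IX s), hIXval, hIYval]
      ring
    have hle : (μ {a | X a ≤ s ∧ Y a ≤ t}).toReal
        ≤ (μ {a | X a ≤ s}).toReal * (μ {a | Y a ≤ t}).toReal := by
      rw [← ENNReal.toReal_mul]
      exact ENNReal.toReal_mono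
        (ENNReal.mul_ne_top (measure_ne_top μ _) (measure_ne_top μ _)) (hNQD s t)
    have key := integral_sub (μ := P) (j22.add j11) (j12.add j21)
    simp only [Pi.add_apply] at key
    have key2 := integral_add (μ := P) j22 j11
    have key3 := integral_add (μ := P) j12 j21
    rw [hfq, key, key2, key3, v22, v11, v12, v21]
    linarith
  -- assemble
  have swap : ∫ p, (∫ q : ℝ × ℝ, f p q) ∂P = ∫ q : ℝ × ℝ, ∫ p, f p q ∂P :=
    integral_integral_swap step2
  have hmain : ∫ p, (X p.1 - X p.2) * (Y p.1 - Y p.2) ∂P ≤ 0 := by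
    have h1 : (fun p : Ω × Ω => (X p.1 - X p.2) * (Y p.1 - Y p.2))
        = fun p => ∫ q : ℝ × ℝ, f p q := by funext p; rw [step1]
    rw [h1, swap]
    exact integral_nonpos fun q => step4 q
  have hexp : ∫ p, (X p.1 - X p.2) * (Y p.1 - Y p.2) ∂P
      = 2 * (∫ ω, X ω * Y ω ∂μ) - 2 * ((∫ ω, X ω ∂μ) * ∫ ω, Y ω ∂μ) := by
    have h1 : (fun p : Ω × Ω => (X p.1 - X p.2) * (Y p.1 - Y p.2))
        = fun p => X p.1 * Y p.1 + X p.2 * Y p.2 - (X p.1 * Y p.2 + X p.2 * Y p.1) := by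
      funext p; ring
    have e11 : ∫ p, X p.1 * Y p.1 ∂P = ∫ ω, X ω * Y ω ∂μ := by
      have h : (fun p : Ω × Ω => X p.1 * Y p.1)
          = fun z : Ω × Ω => (fun a => X a * Y a) z.1 * (fun _ : Ω => (1:ℝ)) z.2 := by
        funext p; simp
      rw [hP, h, integral_prod_mul (fun a => X a * Y a) (fun _ : Ω => (1:ℝ))]; simp
    have e22 : ∫ p, X p.2 * Y p.2 ∂P = ∫ ω, X ω * Y ω ∂μ := by
      have h : (fun p : Ω × Ω => X p.2 * Y p.2)
          = fun z : Ω × Ω => (fun _ : Ω => (1:ℝ)) z.1 * (fun a => X a * Y a) z.2 := by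
        funext p; simp
      rw [hP, h, integral_prod_mul (fun _ : Ω => (1:ℝ)) (fun a => X a * Y a)]; simp
    have e12 : ∫ p, X p.1 * Y p.2 ∂P = (∫ ω, X ω ∂μ) * ∫ ω, Y ω ∂μ := by
      rw [hP]; exact integral_prod_mul X Y
    have e21 : ∫ p, X p.2 * Y p.1 ∂P = (∫ ω, X ω ∂μ) * ∫ ω, Y ω ∂μ := by
      have h : (fun p : Ω × Ω => X p.2 * Y p.1)
          = fun z : Ω × Ω => Y z.1 * X z.2 := by funext p; ring
      rw [hP, h, integral_prod_mul Y X]; ring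
    have key := integral_sub (μ := P) (i11.add i22) (i12.add i21)
    simp only [Pi.add_apply] at key
    have key2 := integral_add (μ := P) i11 i22
    have key3 := integral_add (μ := P) i12 i21
    rw [h1, key, key2, key3, e11, e22, e12, e21]
    ring
  rw [hexp] at hmain
  linarith
end
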